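/- The Lie algebra gl(2,ℂ), regarded as real, equipped with the hypercomplex structure determined by J₁e₁ = -e₂, J₁e₃ = -e₄, J₁e₅ = -e₆, J₁e₇ = -e₈, J₂e₁ = e₅, J₂e₂ = -e₆, J₂e₃ = e₇, J₂e₄ = -e₈ (where e₁,...,e₄ are the elementary matrices E₁₁,E₁₂,E₂₁,E₂₂ and e_{k+4} = i·e_k), admits no compatible left-invariant HKT metric: there is no inner product g on gl(2,ℂ)_ℝ, Hermitian with respect to J₁, J₂, J₃ = J₁J₂, satisfying the HKT condition. -/

import Mathlib

open Matrix

namespace Stmt12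

/-- The real basis `e₁,…,e₈` of `gl(2,ℂ)` : the elementary matrices and `i` times them. -/
noncomputable def e : Fin 8 → Matrix (Fin 2) (Fin 2) ℂ
  | 0 => Matrix.single 0 0 1
  | 1 => Matrix.single 0 1 1
  | 2 => Matrix.single 1 0 1
  | 3 => Matrix.single 1 1 1
  | 4 => Matrix.single 0 0 Complex.I
  | 5 => Matrix.single 0 1 Complex.I
  | 6 => Matrix.single 1 0 Complex.I
  | 7 => Matrix.single 1 1 Complex.I

private lemma lb10 : ⁅e 1, e 0⁆ = -(e 1) := by
  ext a b
  fin_cases a <;> fin_cases b <;>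
    simp [e, Ring.lie_def, Matrix.mul_apply, Matrix.single, Fin.sum_univ_succ]

private lemma lb03 : ⁅e 0, e 3⁆ = 0 := by
  ext a b
  fin_cases a <;> fin_cases b <;>
    simp [e, Ring.lie_def, Matrix.mul_apply, Matrix.single, Fin.sum_univ_succ]

private lemma lb31 : ⁅e 3, e 1⁆ = -(e 1) := by
  ext a b
  fin_cases a <;> fin_cases b <;>
    simp [e, Ring.lie_def, Matrix.mul_apply, Matrix.single, Fin.sum_univ_succ]

private lemma lb45 : ⁅e 4, e 5⁆ = -(e 1) := by
  ext a b
  fin_cases a <;> fin_cases b <;>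
    simp [e, Ring.lie_def, Matrix.mul_apply, Matrix.single, Fin.sum_univ_succ,
      Complex.I_mul_I]

private lemma lb56 : ⁅e 5, e 6⁆ = e 3 - e 0 := by
  ext a b
  fin_cases a <;> fin_cases b <;>
    simp [e, Ring.lie_def, Matrix.mul_apply, Matrix.single, Fin.sum_univ_succ,
      Complex.I_mul_I]

private lemma lb64 : ⁅e 6, e 4⁆ = -(e 2) := by
  ext a b
  fin_cases a <;> fin_cases b <;>
    simp [e, Ring.lie_def, Matrix.mul_apply, Matrix.single, Fin.sum_univ_succ,
      Complex.I_mul_I]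

private lemma rneg_lie (x y : Matrix (Fin 2) (Fin 2) ℂ) : ⁅-x, y⁆ = -⁅x, y⁆ := by
  simp only [Ring.lie_def, neg_mul, mul_neg]; abel

private lemma rlie_neg (x y : Matrix (Fin 2) (Fin 2) ℂ) : ⁅x, -y⁆ = -⁅x, y⁆ := by
  simp only [Ring.lie_def, neg_mul, mul_neg]; abel

private lemma e0_ne_zero : e 0 ≠ 0 := by
  intro h
  have := congrFun (congrFun h 0) 0
  simp [e, Matrix.single] at this

/-- The real Lie algebra `gl(2,ℂ)` equipped with the hypercomplex structure
determined by `J₁e₁ = -e₂`, `J₁e₃ = -e₄`, `J₁e₅ = -e₆`, `J₁e₇ = -e₈`, `J₂e₁ = e₅`,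
`J₂e₂ = -e₆`, `J₂e₃ = e₇`, `J₂e₄ = -e₈` admits no compatible left-invariant HKT metric:
there is no inner product `g`, Hermitian with respect to `J₁, J₂, J₃ = J₁J₂`, satisfying
the HKT condition. -/
theorem stmt12
    (J1 J2 : Matrix (Fin 2) (Fin 2) ℂ →ₗ[ℝ] Matrix (Fin 2) (Fin 2) ℂ)
    (hJ1sq : J1 ∘ₗ J1 = -LinearMap.id) (hJ2sq : J2 ∘ₗ J2 = -LinearMap.id)
    (hanti : J1 ∘ₗ J2 = -(J2 ∘ₗ J1))
    (h1 : J1 (e 0) = -(e 1)) (h2 : J1 (e 2) = -(e 3))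
    (h3 : J1 (e 4) = -(e 5)) (h4 : J1 (e 6) = -(e 7))
    (h5 : J2 (e 0) = e 4) (h6 : J2 (e 1) = -(e 5))
    (h7 : J2 (e 2) = e 6) (h8 : J2 (e 3) = -(e 7)) :
    ¬ ∃ g : Matrix (Fin 2) (Fin 2) ℂ →ₗ[ℝ] Matrix (Fin 2) (Fin 2) ℂ →ₗ[ℝ] ℝ,
      (∀ x y, g x y = g y x) ∧
      (∀ x, x ≠ 0 → 0 < g x x) ∧
      (∀ x y, g (J1 x) (J1 y) = g x y) ∧
      (∀ x y, g (J2 x) (J2 y) = g x y) ∧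
      (∀ x y, g (J1 (J2 x)) (J1 (J2 y)) = g x y) ∧
      (∀ x y z,
        g ⁅J1 x, J1 y⁆ z + g ⁅J1 y, J1 z⁆ x + g ⁅J1 z, J1 x⁆ y =
          g ⁅J2 x, J2 y⁆ z + g ⁅J2 y, J2 z⁆ x + g ⁅J2 z, J2 x⁆ y) ∧
      (∀ x y z,
        g ⁅J2 x, J2 y⁆ z + g ⁅J2 y, J2 z⁆ x + g ⁅J2 z, J2 x⁆ y =
          g ⁅J1 (J2 x), J1 (J2 y)⁆ z + g ⁅J1 (J2 y), J1 (J2 z)⁆ x +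
            g ⁅J1 (J2 z), J1 (J2 x)⁆ y) := by
  rintro ⟨g, hsym, hpos, hHer1, -, -, hC12, -⟩
  -- J1 (e 1) = e 0
  have hJ1e1 : J1 (e 1) = e 0 := by
    have := LinearMap.congr_fun hJ1sq (e 0)
    simp only [LinearMap.comp_apply, LinearMap.neg_apply, LinearMap.id_apply, h1,
      map_neg] at this
    exact neg_injective this
  -- J1 (e 3) = e 2
  have hJ1e3 : J1 (e 3) = e 2 := by
    have := LinearMap.congr_fun hJ1sq (e 2)
    simp only [LinearMap.comp_apply, LinearMap.neg_apply, LinearMap.id_apply, h2,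
      map_neg] at this
    exact neg_injective this
  -- HKT condition at (e 0, e 1, e 2)
  have key := hC12 (e 0) (e 1) (e 2)
  rw [h1, hJ1e1, h2, h5, h6, h7] at key
  rw [show ⁅-(e 1), e 0⁆ = e 1 by rw [rneg_lie, lb10, neg_neg],
      show ⁅e 0, -(e 3)⁆ = (0 : Matrix (Fin 2) (Fin 2) ℂ) by rw [rlie_neg, lb03, neg_zero],
      show ⁅-(e 3), -(e 1)⁆ = -(e 1) by rw [rneg_lie, rlie_neg, neg_neg, lb31],
      show ⁅e 4, -(e 5)⁆ = e 1 by rw [rlie_neg, lb45, neg_neg],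
      show ⁅-(e 5), e 6⁆ = e 0 - e 3 by rw [rneg_lie, lb56, neg_sub],
      lb64] at key
  simp only [map_zero, map_neg, map_sub, LinearMap.zero_apply, LinearMap.neg_apply,
    LinearMap.sub_apply] at key
  -- Hermitian conditions
  have her00 := hHer1 (e 0) (e 0)
  rw [h1] at her00
  have her03 := hHer1 (e 0) (e 3)
  rw [h1, hJ1e3] at her03
  simp only [map_neg, LinearMap.neg_apply, neg_neg] at her00 her03 key
  have s30 := hsym (e 3) (e 0)
  have s21 := hsym (e 2) (e 1)
  have pos := hpos (e 0) e0_ne_zero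
  linarith
end Stmt12
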